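/- Define the Tits form of a triple of compositions (a, b, c) of 2n by Q(a,b,c) = (‖a‖² + ‖b‖² + ‖c‖² − (2n)²)/2 where ‖a‖² is the sum of squares of the parts. If a = (1, 2n−2, 1), b = (b₁,b₂,b₃) is a symmetric composition of 2n with all parts positive, c is a symmetric composition of 2n with all parts positive, and Q(a,b,c) ≤ 0, then either (a,b,c) = ((1,2,1),(1,2,1),(1,1,1,1)) or (a,b,c) = ((1,4,1),(2,2,2),(1,1,1,1,1,1)); in both cases Q = 0. -/
import Mathlib

/-- `‖a‖²`, the sum of squares of the parts of a composition. -/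
def sumSq (l : List ℕ) : ℕ := (l.map fun x => x ^ 2).sum

/-- The Tits quadratic form of a triple of compositions of `2n`. -/
def titsQ (n : ℕ) (a b c : List ℕ) : ℤ :=
  ((sumSq a : ℤ) + sumSq b + sumSq c - (2 * n) ^ 2) / 2

lemma sumSq_ge_sum (l : List ℕ) : l.sum ≤ sumSq l := by
  induction l with
  | nil => simp [sumSq]
  | cons x t ih =>
    have hx : x ≤ x ^ 2 := Nat.le_self_pow (by norm_num) x
    simp only [sumSq, List.map_cons, List.sum_cons] at *
    omega

lemma sumSq_parity (l : List ℕ) : sumSq l % 2 = l.sum % 2 := by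
  induction l with
  | nil => rfl
  | cons x t ih =>
    have hx : x ^ 2 % 2 = x % 2 := by
      rw [pow_two, Nat.mul_mod]
      rcases Nat.mod_two_eq_zero_or_one x with h | h <;> simp [h]
    simp only [sumSq, List.map_cons, List.sum_cons] at *
    omega

lemma sumSq_eq_sum (l : List ℕ) (hpos : ∀ x ∈ l, 0 < x) (h : sumSq l = l.sum) :
    ∀ x ∈ l, x = 1 := by
  induction l with
  | nil => simp
  | cons x t ih =>
    have hx : x ≤ x ^ 2 := Nat.le_self_pow (by norm_num) x
    have ht := sumSq_ge_sum t
    simp only [sumSq, List.map_cons, List.sum_cons] at h ht hx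
    have hxx : x ^ 2 = x := by omega
    have hts : sumSq t = t.sum := by simp only [sumSq]; omega
    intro y hy
    rcases List.mem_cons.1 hy with rfl | hy'
    · have := hpos y (by simp)
      nlinarith [hxx]
    · exact ih (fun z hz => hpos z (List.mem_cons_of_mem _ hz)) hts y hy'

theorem stmt_13 (n : ℕ) (hn : 2 ≤ n) (a b c : List ℕ)
    (ha : a = [1, 2 * n - 2, 1])
    (hbsum : b.sum = 2 * n) (hblen : b.length = 3)
    (hbpos : ∀ x ∈ b, 0 < x) (hbsym : b.reverse = b)
    (hcsum : c.sum = 2 * n) (hcpos : ∀ x ∈ c, 0 < x) (hcsym : c.reverse = c)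
    (hQ : titsQ n a b c ≤ 0) :
    ((a = [1, 2, 1] ∧ b = [1, 2, 1] ∧ c = [1, 1, 1, 1]) ∨
      (a = [1, 4, 1] ∧ b = [2, 2, 2] ∧ c = [1, 1, 1, 1, 1, 1])) ∧
      titsQ n a b c = 0 := by
  subst ha
  -- destructure b
  rcases b with _ | ⟨b1, b⟩; · simp at hblen
  rcases b with _ | ⟨b2, b⟩; · simp at hblen
  rcases b with _ | ⟨b3, b⟩; · simp at hblen
  rcases b with _ | ⟨b4, b⟩; swap; · simp at hblen
  have hb31 : b1 = b3 := by
    have h := hbsym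
    simp at h
    omega
  subst hb31
  have hb1pos : 0 < b1 := hbpos b1 (by simp)
  have hb2pos : 0 < b2 := hbpos b2 (by simp)
  simp only [List.sum_cons, List.sum_nil] at hbsum
  -- basic facts about c
  have hcge : 2 * n ≤ sumSq c := hcsum ▸ sumSq_ge_sum c
  have hcpar : sumSq c % 2 = 0 := by rw [sumSq_parity, hcsum]; omega
  -- the numerator, in ℤ
  have h2n : (((2 * n - 2 : ℕ)) : ℤ) = 2 * n - 2 := by
    have h' : 2 ≤ 2 * n := by omega
    push_cast [Nat.cast_sub h']
    ring
  have hQ' : ((sumSq [1, 2*n-2, 1] : ℤ) + sumSq [b1, b2, b1] + sumSq c - (2 * n) ^ 2) / 2 ≤ 0 := hQ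
  have hdvd : (2 : ℤ) ∣ ((sumSq [1, 2*n-2, 1] : ℤ) + sumSq [b1, b2, b1] + sumSq c - (2 * n) ^ 2) := by
    have h1 : sumSq [1, 2*n-2, 1] % 2 = 0 := by
      rw [sumSq_parity]; simp; omega
    have h2 : sumSq [b1, b2, b1] % 2 = 0 := by
      rw [sumSq_parity]; simp; omega
    obtain ⟨k, hk⟩ : (2 : ℤ) ∣ (2 * (n : ℤ)) ^ 2 := ⟨2 * (n : ℤ) ^ 2, by ring⟩
    omega
  have hN : (sumSq [1, 2*n-2, 1] : ℤ) + sumSq [b1, b2, b1] + sumSq c - (2 * n) ^ 2 ≤ 0 := by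
    omega
  -- expand the sums of squares
  have hsa : (sumSq [1, 2*n-2, 1] : ℤ) = 2 + (2 * n - 2) ^ 2 := by
    simp only [sumSq, List.map_cons, List.map_nil, List.sum_cons, List.sum_nil]
    push_cast [h2n]
    ring
  have hsb : (sumSq [b1, b2, b1] : ℤ) = 2 * (b1 : ℤ) ^ 2 + (b2 : ℤ) ^ 2 := by
    simp only [sumSq, List.map_cons, List.map_nil, List.sum_cons, List.sum_nil]
    push_cast
    ring
  rw [hsa, hsb] at hN
  have hbsumZ : (b1 : ℤ) + b2 + b1 = 2 * n := by omega
  have hSZ : (2 * n : ℤ) ≤ (sumSq c : ℤ) := by exact_mod_cast hcge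
  -- n ≤ 3
  have hn3 : n ≤ 3 := by
    by_contra h
    have h4 : (4 : ℤ) ≤ (n : ℤ) := by exact_mod_cast (by omega : 4 ≤ n)
    nlinarith [sq_nonneg (3 * (b1 : ℤ) - 2 * n), hN, hSZ]
  interval_cases n
  · -- n = 2
    have hb1 : b1 = 1 := by omega
    subst hb1
    have hb2 : b2 = 2 := by omega
    subst hb2
    norm_num at hN
    have hSeq : sumSq c = c.sum := by omega
    have hcone := sumSq_eq_sum c hcpos hSeq
    have hc' : c = List.replicate c.length 1 := List.eq_replicate_iff.2 ⟨rfl, hcone⟩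
    have hclen : c.length = 4 := by
      have h4 := hcsum
      rw [hc'] at h4
      simpa using h4
    have hc : c = [1, 1, 1, 1] := by rw [hc', hclen]; rfl
    subst hc
    exact ⟨Or.inl ⟨rfl, rfl, rfl⟩, by norm_num [titsQ, sumSq]⟩
  · -- n = 3
    have hb1le : b1 ≤ 2 := by omega
    interval_cases b1
    · exfalso
      have hb2 : b2 = 4 := by omega
      subst hb2
      norm_num at hN
      omega
    · have hb2 : b2 = 2 := by omega
      subst hb2
      norm_num at hN
      have hSeq : sumSq c = c.sum := by omega
      have hcone := sumSq_eq_sum c hcpos hSeq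
      have hc' : c = List.replicate c.length 1 := List.eq_replicate_iff.2 ⟨rfl, hcone⟩
      have hclen : c.length = 6 := by
        have h6 := hcsum
        rw [hc'] at h6
        simpa using h6
      have hc : c = [1, 1, 1, 1, 1, 1] := by rw [hc', hclen]; rfl
      subst hc
      exact ⟨Or.inr ⟨rfl, rfl, rfl⟩, by norm_num [titsQ, sumSq]⟩
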